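/- Let m ≥ 3 be odd, and let θ_1, ..., θ_m ∈ (0, π) be the dihedral angles of a patch of m sectors around an interior edge, with unit face normals n_1, ..., n_m and tangents t_j as above. Then there exists a piecewise-constant symmetric tensor field T = (T_1, ..., T_m) with normal continuity across all interior faces (T_j n_{j+1} = T_{j+1} n_{j+1}, cyclically) such that n_1^T T n_1 = 1 and n_j^T T n_j = 0 for j = 2, ..., m. In fact one can take T with T n_1 = n_1 + α_1 t_1 and T n_j = α_j t_j where α_1 = (cot θ_1 - cot θ_m)/2, α_2 = (cot θ_1 + cot θ_m)/2, and α_j = (-1)^j α_2 for j ≥ 2. -/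
import Mathlib


open Matrix

private lemma vmv_transpose (u v : Fin 3 → ℝ) : (vecMulVec u v)ᵀ = vecMulVec v u := by
  ext i j
  simp [vecMulVec_apply, transpose_apply, mul_comm]

private lemma vmv_mulVec (u v x : Fin 3 → ℝ) : vecMulVec u v *ᵥ x = (v ⬝ᵥ x) • u := by
  ext i
  simp only [vecMulVec, mulVec, dotProduct, of_apply, Pi.smul_apply, smul_eq_mul,
    Finset.sum_mul]
  exact Finset.sum_congr rfl fun k _ => by ring

/-- Odd-parity construction: for an odd number `m ≥ 3` of sectors around an interior
edge, there is a normal-continuous piecewise-constant symmetric tensor field `T` with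
`n_1ᵀ T n_1 = 1`, `n_jᵀ T n_j = 0` for `j ≥ 2`, given explicitly by
`T n_1 = n_1 + α_1 t_1`, `T n_j = α_j t_j` with
`α_1 = (cot θ_1 - cot θ_m)/2`, `α_j = (-1)^j (cot θ_1 + cot θ_m)/2` for `j ≥ 2`. -/
theorem stmt7 (m : ℕ) [NeZero m] (hm : 3 ≤ m) (hmo : Odd m)
    (θ : Fin m → ℝ) (hθ : ∀ j, θ j ∈ Set.Ioo 0 Real.pi)
    (hsum : ∑ j, θ j = 2 * Real.pi)
    (n t : Fin m → Fin 3 → ℝ)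
    (hn : ∀ j, n j ⬝ᵥ n j = 1) (htj : ∀ j, t j ⬝ᵥ t j = 1)
    (hnt : ∀ j, n j ⬝ᵥ t j = 0)
    (hrot1 : ∀ j, n (j + 1) = Real.cos (θ j) • n j - Real.sin (θ j) • t j)
    (hrot2 : ∀ j, n j = Real.cos (θ j) • n (j + 1) + Real.sin (θ j) • t (j + 1))
    (α1 α2 : ℝ)
    (hα1 : α1 = (Real.cos (θ 0) / Real.sin (θ 0) - Real.cos (θ (-1)) / Real.sin (θ (-1))) / 2)
    (hα2 : α2 = (Real.cos (θ 0) / Real.sin (θ 0) + Real.cos (θ (-1)) / Real.sin (θ (-1))) / 2) :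
    ∃ T : Fin m → Matrix (Fin 3) (Fin 3) ℝ,
      (∀ j, (T j).IsSymm) ∧
      (∀ j, T j *ᵥ n (j + 1) = T (j + 1) *ᵥ n (j + 1)) ∧
      T 0 *ᵥ n 0 = n 0 + α1 • t 0 ∧
      (∀ j : Fin m, j ≠ 0 → T j *ᵥ n j = ((-1 : ℝ) ^ ((j : ℕ) + 1) * α2) • t j) ∧
      n 0 ⬝ᵥ (T 0 *ᵥ n 0) = 1 ∧
      (∀ j : Fin m, j ≠ 0 → n j ⬝ᵥ (T j *ᵥ n j) = 0) := by
  obtain ⟨k, rfl⟩ : ∃ k, m = k + 1 := ⟨m - 1, by omega⟩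
  have hs : ∀ j, Real.sin (θ j) ≠ 0 := fun j =>
    ne_of_gt (Real.sin_pos_of_pos_of_lt_pi (hθ j).1 (hθ j).2)
  have htn : ∀ j, t j ⬝ᵥ n j = 0 := fun j => by rw [dotProduct_comm]; exact hnt j
  -- dot products with the next normal
  have hnn1 : ∀ j, n j ⬝ᵥ n (j + 1) = Real.cos (θ j) := by
    intro j
    rw [hrot1 j]
    simp [dotProduct_sub, dotProduct_smul, hn j, hnt j]
  have htn1 : ∀ j, t j ⬝ᵥ n (j + 1) = -Real.sin (θ j) := by
    intro j
    rw [hrot1 j]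
    simp [dotProduct_sub, dotProduct_smul, htj j, htn j]
  -- tangent rotation
  have htrot : ∀ j, t (j + 1) = Real.sin (θ j) • n j + Real.cos (θ j) • t j := by
    intro j
    have h := hrot2 j
    rw [hrot1 j] at h
    have hpyth := Real.sin_sq_add_cos_sq (θ j)
    funext i
    apply mul_left_cancel₀ (hs j)
    have hh : n j i = Real.cos (θ j) * (Real.cos (θ j) * n j i - Real.sin (θ j) * t j i)
        + Real.sin (θ j) * t (j + 1) i := by
      have := congrFun h i
      simpa using this
    simp only [Pi.add_apply, Pi.smul_apply, smul_eq_mul]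
    linear_combination -hh - n j i * hpyth
  -- the coefficients
  set p : Fin (k+1) → ℝ := fun j => if j = 0 then 1 else 0 with hp
  set q : Fin (k+1) → ℝ := fun j => if j = 0 then α1 else (-1) ^ ((j : ℕ) + 1) * α2 with hq
  set r : Fin (k+1) → ℝ := fun j =>
    (q j * Real.cos (θ j) + p (j + 1) * Real.sin (θ j) - q (j + 1) * Real.cos (θ j))
      / Real.sin (θ j) with hrdef
  set T : Fin (k+1) → Matrix (Fin 3) (Fin 3) ℝ := fun j =>
    p j • vecMulVec (n j) (n j)
      + q j • (vecMulVec (n j) (t j) + vecMulVec (t j) (n j))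
      + r j • vecMulVec (t j) (t j) with hTdef
  have hmv : ∀ j x, T j *ᵥ x = (p j * (n j ⬝ᵥ x) + q j * (t j ⬝ᵥ x)) • n j
      + (q j * (n j ⬝ᵥ x) + r j * (t j ⬝ᵥ x)) • t j := by
    intro j x
    simp only [hTdef]
    simp only [add_mulVec, smul_mulVec, vmv_mulVec]
    module
  -- values on own normals
  have hval : ∀ j, T j *ᵥ n j = p j • n j + q j • t j := by
    intro j
    rw [hmv j (n j), hn j, htn j]
    module
  have h1val : ((1 : Fin (k+1)) : ℕ) = 1 := by
    rw [Fin.val_one']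
    exact Nat.mod_eq_of_lt (by omega)
  have h1ne : (1 : Fin (k+1)) ≠ 0 := by
    intro h
    have := h1val
    rw [h] at this
    simp at this
  have hsin0 := hs 0
  have hsinm := hs (-1)
  -- key scalar identities
  have key1 : ∀ j, p j * Real.cos (θ j) - q j * Real.sin (θ j)
      = p (j + 1) * Real.cos (θ j) + q (j + 1) * Real.sin (θ j) := by
    intro j
    by_cases hj0 : j = 0
    · subst hj0
      simp only [hp, hq, zero_add, if_pos rfl, if_neg h1ne, h1val]
      rw [hα1, hα2]
      field_simp
      ring
    · by_cases hj1 : j + 1 = 0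
      · have hjneg : j = -1 := eq_neg_of_add_eq_zero_left hj1
        have hjval : (j : ℕ) = k := by rw [hjneg]; exact Fin.coe_neg_one
        simp only [hp, hq, if_neg hj0, if_pos hj1, hjval]
        have hpow : (-1 : ℝ) ^ (k + 1) = -1 := Odd.neg_one_pow hmo
        rw [hpow]
        have hθj : θ j = θ (-1) := by rw [hjneg]
        rw [hθj, hα1, hα2]
        field_simp
        ring
      · have hjval : ((j + 1 : Fin (k+1)) : ℕ) = (j : ℕ) + 1 := by
          rw [Fin.val_add_one]
          have hlast : j ≠ Fin.last k := by
            intro h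
            exact hj1 (by rw [h]; exact Fin.last_add_one k)
          rw [if_neg hlast]
        simp only [hp, hq, if_neg hj0, if_neg hj1, hjval]
        ring
  have key2 : ∀ j, q j * Real.cos (θ j) - r j * Real.sin (θ j)
      = q (j + 1) * Real.cos (θ j) - p (j + 1) * Real.sin (θ j) := by
    intro j
    simp only [hrdef]
    rw [div_mul_cancel₀ _ (hs j)]
    ring
  refine ⟨T, ?_, ?_, ?_, ?_, ?_, ?_⟩
  · -- symmetry
    intro j
    rw [Matrix.IsSymm]
    simp only [hTdef, transpose_add, transpose_smul, vmv_transpose]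
    module
  · -- normal continuity
    intro j
    rw [hmv j (n (j + 1)), hnn1 j, htn1 j, hval (j + 1), hrot1 j, htrot j]
    have e1 := key1 j
    have e2 := key2 j
    match_scalars
    · linear_combination e1
    · linear_combination e2
  · -- T 0 n 0
    rw [hval 0]
    simp only [hp, hq, if_pos rfl]
    module
  · -- T j n j for j ≠ 0
    intro j hj
    rw [hval j]
    simp only [hp, hq, if_neg hj]
    module
  · -- n0 T0 n0 = 1
    rw [hval 0]
    simp only [hp, hq, if_pos rfl]
    simp [dotProduct_add, dotProduct_smul, hn 0, hnt 0]
  · -- n j T j n j = 0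
    intro j hj
    rw [hval j]
    simp only [hp, hq, if_neg hj]
    simp [dotProduct_add, dotProduct_smul, hn j, hnt j]
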